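/- The integral ∫_0^N s J₁(s)² ds tends to +∞ as N → ∞, where J₁ is the Bessel function of the first kind of order 1. -/

import Mathlib

open Real MeasureTheory Filter

/-- The Bessel function of the first kind of order 1. -/
noncomputable def besselJ1 (t : ℝ) : ℝ :=
  (1 / π) * ∫ θ in (0:ℝ)..π, Real.cos (θ - t * Real.sin θ)

noncomputable def besselJ0 (t : ℝ) : ℝ :=
  (1 / π) * ∫ θ in (0:ℝ)..π, Real.cos (t * Real.sin θ)

lemma hasDerivAt_int_J0 (t : ℝ) :
    HasDerivAt (fun x : ℝ => ∫ θ in (0:ℝ)..π, Real.cos (x * Real.sin θ))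
      (∫ θ in (0:ℝ)..π, -(Real.sin θ * Real.sin (t * Real.sin θ))) t := by
  have := (intervalIntegral.hasDerivAt_integral_of_dominated_loc_of_deriv_le
    (F := fun x θ => Real.cos (x * Real.sin θ))
    (F' := fun x θ => -(Real.sin θ * Real.sin (x * Real.sin θ)))
    (x₀ := t) (bound := fun _ => 1) (a := 0) (b := π) (μ := volume) (s := Metric.ball t 1)
    (Metric.ball_mem_nhds t one_pos)
    (Filter.Eventually.of_forall fun x =>
      (Continuous.aestronglyMeasurable (by continuity)))
    (Continuous.intervalIntegrable (by continuity) _ _)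
    (Continuous.aestronglyMeasurable (by continuity))
    (Filter.Eventually.of_forall fun θ _ x _ => by
      rw [norm_neg, norm_mul]
      calc ‖Real.sin θ‖ * ‖Real.sin (x * Real.sin θ)‖ ≤ 1 * 1 := by
            exact mul_le_mul (by rw [Real.norm_eq_abs]; exact Real.abs_sin_le_one _)
              (by rw [Real.norm_eq_abs]; exact Real.abs_sin_le_one _) (norm_nonneg _) zero_le_one
        _ = 1 := one_mul 1)
    (Continuous.intervalIntegrable continuous_const _ _)
    (Filter.Eventually.of_forall fun θ _ x _ => by
      have h1 : HasDerivAt (fun x : ℝ => x * Real.sin θ) (Real.sin θ) x := by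
        simpa using (hasDerivAt_id x).mul_const (Real.sin θ)
      have := (Real.hasDerivAt_cos (x * Real.sin θ)).comp x h1
      exact this.congr_deriv (by ring)))
  exact this.2

lemma hasDerivAt_int_J1 (t : ℝ) :
    HasDerivAt (fun x : ℝ => ∫ θ in (0:ℝ)..π, Real.cos (θ - x * Real.sin θ))
      (∫ θ in (0:ℝ)..π, Real.sin θ * Real.sin (θ - t * Real.sin θ)) t := by
  have := (intervalIntegral.hasDerivAt_integral_of_dominated_loc_of_deriv_le
    (F := fun x θ => Real.cos (θ - x * Real.sin θ))
    (F' := fun x θ => Real.sin θ * Real.sin (θ - x * Real.sin θ))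
    (x₀ := t) (bound := fun _ => 1) (a := 0) (b := π) (μ := volume) (s := Metric.ball t 1)
    (Metric.ball_mem_nhds t one_pos)
    (Filter.Eventually.of_forall fun x =>
      (Continuous.aestronglyMeasurable (by continuity)))
    (Continuous.intervalIntegrable (by continuity) _ _)
    (Continuous.aestronglyMeasurable (by continuity))
    (Filter.Eventually.of_forall fun θ _ x _ => by
      rw [norm_mul]
      calc ‖Real.sin θ‖ * ‖Real.sin (θ - x * Real.sin θ)‖ ≤ 1 * 1 :=
            mul_le_mul (by rw [Real.norm_eq_abs]; exact Real.abs_sin_le_one _)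
              (by rw [Real.norm_eq_abs]; exact Real.abs_sin_le_one _) (norm_nonneg _) zero_le_one
        _ = 1 := one_mul 1)
    (Continuous.intervalIntegrable continuous_const _ _)
    (Filter.Eventually.of_forall fun θ _ x _ => by
      have h1 : HasDerivAt (fun x : ℝ => θ - x * Real.sin θ) (-Real.sin θ) x := by
        simpa using ((hasDerivAt_id x).mul_const (Real.sin θ)).const_sub θ
      have := (Real.hasDerivAt_cos (θ - x * Real.sin θ)).comp x h1
      exact this.congr_deriv (by ring)))
  exact this.2

-- ∫_0^π cos θ * cos (t sin θ) dθ = 0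
lemma int_cos_cos (t : ℝ) :
    (∫ θ in (0:ℝ)..π, Real.cos θ * Real.cos (t * Real.sin θ)) = 0 := by
  rcases eq_or_ne t 0 with rfl | ht
  · simp
  · have h : ∀ θ ∈ Set.uIcc (0:ℝ) π, HasDerivAt (fun θ => Real.sin (t * Real.sin θ) / t)
        (Real.cos θ * Real.cos (t * Real.sin θ)) θ := by
      intro θ _
      have h1 : HasDerivAt (fun θ : ℝ => t * Real.sin θ) (t * Real.cos θ) θ :=
        (Real.hasDerivAt_sin θ).const_mul t
      have h2 := ((Real.hasDerivAt_sin (t * Real.sin θ)).comp θ h1).div_const t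
      exact h2.congr_deriv (by field_simp)
    have := intervalIntegral.integral_eq_sub_of_hasDerivAt h
      (Continuous.intervalIntegrable (by continuity) _ _)
    simpa using this

-- ∫_0^π cos(θ - t sin θ) dθ = t * ∫_0^π cos θ * cos(θ - t sin θ) dθ
lemma int_key (t : ℝ) :
    (∫ θ in (0:ℝ)..π, Real.cos (θ - t * Real.sin θ)) =
      t * ∫ θ in (0:ℝ)..π, Real.cos θ * Real.cos (θ - t * Real.sin θ) := by
  have h : ∀ θ ∈ Set.uIcc (0:ℝ) π, HasDerivAt (fun θ => Real.sin (θ - t * Real.sin θ))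
      ((1 - t * Real.cos θ) * Real.cos (θ - t * Real.sin θ)) θ := by
    intro θ _
    have h1 : HasDerivAt (fun θ : ℝ => θ - t * Real.sin θ) (1 - t * Real.cos θ) θ :=
      (hasDerivAt_id θ).sub ((Real.hasDerivAt_sin θ).const_mul t)
    have := (Real.hasDerivAt_sin (θ - t * Real.sin θ)).comp θ h1
    exact this.congr_deriv (by ring)
  have h0 := intervalIntegral.integral_eq_sub_of_hasDerivAt h
    (Continuous.intervalIntegrable (by continuity) _ _)
  have h2 : (∫ θ in (0:ℝ)..π, (1 - t * Real.cos θ) * Real.cos (θ - t * Real.sin θ)) =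
      (∫ θ in (0:ℝ)..π, Real.cos (θ - t * Real.sin θ)) -
        t * ∫ θ in (0:ℝ)..π, Real.cos θ * Real.cos (θ - t * Real.sin θ) := by
    rw [← intervalIntegral.integral_const_mul, ← intervalIntegral.integral_sub
      (Continuous.intervalIntegrable (by continuity) _ _)
      (Continuous.intervalIntegrable (by continuity) _ _)]
    congr 1; ext θ; ring
  rw [h2] at h0
  simp at h0
  linarith [h0]

lemma int_J1_expand (t : ℝ) :
    (∫ θ in (0:ℝ)..π, Real.cos (θ - t * Real.sin θ)) =
      ∫ θ in (0:ℝ)..π, Real.sin θ * Real.sin (t * Real.sin θ) := by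
  have h : (∫ θ in (0:ℝ)..π, Real.cos (θ - t * Real.sin θ)) =
      ∫ θ in (0:ℝ)..π, (Real.cos θ * Real.cos (t * Real.sin θ) +
        Real.sin θ * Real.sin (t * Real.sin θ)) := by
    apply intervalIntegral.integral_congr
    intro θ _
    exact Real.cos_sub θ (t * Real.sin θ)
  rw [h, intervalIntegral.integral_add (Continuous.intervalIntegrable (by continuity) _ _)
    (Continuous.intervalIntegrable (by continuity) _ _), int_cos_cos, zero_add]

lemma hasDerivAt_J0 (t : ℝ) : HasDerivAt besselJ0 (-besselJ1 t) t := by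
  have h := (hasDerivAt_int_J0 t).const_mul (1 / π)
  have e : (1 / π) * ∫ θ in (0:ℝ)..π, -(Real.sin θ * Real.sin (t * Real.sin θ)) =
      -besselJ1 t := by
    rw [intervalIntegral.integral_neg, besselJ1, int_J1_expand]
    ring
  rw [e] at h
  exact h

lemma hasDerivAt_J1 {t : ℝ} (ht : t ≠ 0) :
    HasDerivAt besselJ1 (besselJ0 t - besselJ1 t / t) t := by
  have h := (hasDerivAt_int_J1 t).const_mul (1 / π)
  have e1 : (∫ θ in (0:ℝ)..π, Real.sin θ * Real.sin (θ - t * Real.sin θ)) =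
      (∫ θ in (0:ℝ)..π, Real.cos (t * Real.sin θ)) -
        ∫ θ in (0:ℝ)..π, Real.cos θ * Real.cos (θ - t * Real.sin θ) := by
    rw [← intervalIntegral.integral_sub (Continuous.intervalIntegrable (by continuity) _ _)
      (Continuous.intervalIntegrable (by continuity) _ _)]
    apply intervalIntegral.integral_congr
    intro θ _
    have := Real.cos_sub θ (θ - t * Real.sin θ)
    simp only [sub_sub_cancel] at this
    dsimp only
    linarith
  have e2 : (∫ θ in (0:ℝ)..π, Real.cos θ * Real.cos (θ - t * Real.sin θ)) =
      (1 / t) * ∫ θ in (0:ℝ)..π, Real.cos (θ - t * Real.sin θ) := by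
    rw [int_key t]; field_simp
  have e : (1 / π) * ∫ θ in (0:ℝ)..π, Real.sin θ * Real.sin (θ - t * Real.sin θ) =
      besselJ0 t - besselJ1 t / t := by
    rw [e1, e2, besselJ0, besselJ1]
    field_simp
  rw [e] at h
  exact h

lemma besselJ1_contDiffAt (t : ℝ) : DifferentiableAt ℝ besselJ1 t := by
  have h := (hasDerivAt_int_J1 t).const_mul (1 / π)
  exact h.differentiableAt

lemma besselJ1_continuous : Continuous besselJ1 := by
  have : Differentiable ℝ besselJ1 := fun t => besselJ1_contDiffAt t
  exact this.continuous

lemma besselJ0_continuous : Continuous besselJ0 := by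
  have : Differentiable ℝ besselJ0 := fun t => (hasDerivAt_J0 t).differentiableAt
  exact this.continuous

noncomputable def uB (s : ℝ) : ℝ := Real.sqrt s * besselJ1 s
noncomputable def vB (s : ℝ) : ℝ := Real.sqrt s * besselJ0 s - besselJ1 s / (2 * Real.sqrt s)
noncomputable def EB (s : ℝ) : ℝ := vB s ^ 2 + uB s ^ 2

lemma sqrt_ne {s : ℝ} (hs : 0 < s) : Real.sqrt s ≠ 0 := by
  positivity

lemma hasDerivAt_uB {s : ℝ} (hs : 0 < s) : HasDerivAt uB (vB s) s := by
  have hsq := Real.hasDerivAt_sqrt hs.ne'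
  have hJ := hasDerivAt_J1 hs.ne'
  have h := hsq.mul hJ
  have hss : Real.sqrt s * Real.sqrt s = s := Real.mul_self_sqrt hs.le
  have e : 1 / (2 * Real.sqrt s) * besselJ1 s +
      Real.sqrt s * (besselJ0 s - besselJ1 s / s) = vB s := by
    rw [vB]
    have hr := sqrt_ne hs
    field_simp
    linear_combination (-2 * besselJ1 s) * hss
  rw [e] at h
  exact h

lemma hasDerivAt_vB {s : ℝ} (hs : 0 < s) :
    HasDerivAt vB (-(1 - 3 / (4 * s ^ 2)) * uB s) s := by
  have hsq := Real.hasDerivAt_sqrt hs.ne'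
  have hJ0 := hasDerivAt_J0 s
  have hJ1 := hasDerivAt_J1 hs.ne'
  have hden : HasDerivAt (fun s : ℝ => 2 * Real.sqrt s) (2 * (1 / (2 * Real.sqrt s))) s :=
    hsq.const_mul 2
  have hne : 2 * Real.sqrt s ≠ 0 := by positivity
  have h := (hsq.mul hJ0).sub (hJ1.div hden hne)
  have hss : Real.sqrt s * Real.sqrt s = s := Real.mul_self_sqrt hs.le
  have e : (1 / (2 * Real.sqrt s) * besselJ0 s + Real.sqrt s * (-besselJ1 s)) -
      (((besselJ0 s - besselJ1 s / s) * (2 * Real.sqrt s) -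
        besselJ1 s * (2 * (1 / (2 * Real.sqrt s)))) / (2 * Real.sqrt s) ^ 2) =
      -(1 - 3 / (4 * s ^ 2)) * uB s := by
    rw [uB]
    have hr := sqrt_ne hs
    field_simp
    linear_combination (besselJ1 s * (-12 * Real.sqrt s ^ 2 - 4 * s)) * hss
  rw [e] at h
  exact h

lemma hasDerivAt_EB {s : ℝ} (hs : 0 < s) :
    HasDerivAt EB (3 / (2 * s ^ 2) * (uB s * vB s)) s := by
  have hu := hasDerivAt_uB hs
  have hv := hasDerivAt_vB hs
  have h := (hv.pow 2).add (hu.pow 2)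
  have e : (2 : ℕ) * vB s ^ (2 - 1) * (-(1 - 3 / (4 * s ^ 2)) * uB s) +
      (2 : ℕ) * uB s ^ (2 - 1) * vB s = 3 / (2 * s ^ 2) * (uB s * vB s) := by
    have hs' : s ≠ 0 := hs.ne'
    field_simp
    ring
  rw [e] at h
  exact h

lemma EB_nonneg (s : ℝ) : 0 ≤ EB s := by
  rw [EB]; positivity

lemma EB_continuousOn : ContinuousOn EB (Set.Ici 1) := fun s hs =>
  ((hasDerivAt_EB (lt_of_lt_of_le one_pos hs)).continuousAt).continuousWithinAt

lemma uv_le (s : ℝ) : uB s * vB s ≤ EB s / 2 := by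
  rw [EB]; nlinarith [sq_nonneg (uB s - vB s)]

lemma uv_ge (s : ℝ) : -(EB s / 2) ≤ uB s * vB s := by
  rw [EB]; nlinarith [sq_nonneg (uB s + vB s)]

lemma hasDerivAt_exp_aux {s : ℝ} (hs : 0 < s) (c : ℝ) :
    HasDerivAt (fun s : ℝ => Real.exp (c / s)) (Real.exp (c / s) * (-(c / s ^ 2))) s := by
  have h1 : HasDerivAt (fun s : ℝ => c / s) (c * -(s ^ 2)⁻¹) s := by
    simpa only [div_eq_mul_inv] using (hasDerivAt_inv hs.ne').const_mul c
  have e : c * -(s ^ 2)⁻¹ = -(c / s ^ 2) := by rw [div_eq_mul_inv]; ring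
  rw [e] at h1
  exact h1.exp

lemma EB_upper {s : ℝ} (hs : 1 ≤ s) : EB s ≤ EB 1 * Real.exp (3 / 4) := by
  set g : ℝ → ℝ := fun s => EB s * Real.exp ((3 / 4) / s) with hg
  have hderiv : ∀ x : ℝ, 0 < x → HasDerivAt g
      (3 / (2 * x ^ 2) * (uB x * vB x) * Real.exp ((3 / 4) / x) +
        EB x * (Real.exp ((3 / 4) / x) * (-((3 / 4) / x ^ 2)))) x := fun x hx =>
    (hasDerivAt_EB hx).mul (hasDerivAt_exp_aux hx (3 / 4))
  have hanti : AntitoneOn g (Set.Ici 1) := by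
    apply antitoneOn_of_deriv_nonpos (convex_Ici 1)
    · exact fun x hx => ((hderiv x (lt_of_lt_of_le one_pos hx)).continuousAt).continuousWithinAt
    · intro x hx
      rw [interior_Ici] at hx
      exact ((hderiv x (lt_trans one_pos hx)).differentiableAt).differentiableWithinAt
    · intro x hx
      rw [interior_Ici] at hx
      have hx0 : (0:ℝ) < x := lt_trans one_pos hx
      rw [(hderiv x hx0).deriv]
      have h1 := uv_le x
      have h2 := EB_nonneg x
      have h3 : (0:ℝ) < Real.exp ((3 / 4) / x) := Real.exp_pos _
      have hx2 : (0:ℝ) < x ^ 2 := by positivity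
      calc 3 / (2 * x ^ 2) * (uB x * vB x) * Real.exp ((3 / 4) / x) +
            EB x * (Real.exp ((3 / 4) / x) * (-((3 / 4) / x ^ 2)))
          ≤ 3 / (2 * x ^ 2) * (EB x / 2) * Real.exp ((3 / 4) / x) +
            EB x * (Real.exp ((3 / 4) / x) * (-((3 / 4) / x ^ 2))) := by
            apply add_le_add_left
            apply mul_le_mul_of_nonneg_right _ h3.le
            apply mul_le_mul_of_nonneg_left h1 (by positivity)
        _ = 0 := by field_simp; ring
  have := hanti (Set.mem_Ici.mpr le_rfl) (Set.mem_Ici.mpr hs) hs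
  have hge : (1:ℝ) ≤ Real.exp ((3 / 4) / s) :=
    Real.one_le_exp (by positivity)
  have h0 : EB s ≤ EB s * Real.exp ((3 / 4) / s) :=
    le_mul_of_one_le_right (EB_nonneg s) hge
  calc EB s ≤ g s := h0
    _ ≤ g 1 := this
    _ = EB 1 * Real.exp (3 / 4) := by rw [hg]; norm_num

lemma EB_lower {s : ℝ} (hs : 1 ≤ s) : EB 1 * Real.exp (-(3 / 4)) ≤ EB s := by
  set g : ℝ → ℝ := fun s => EB s * Real.exp (-(3 / 4) / s) with hg
  have hderiv : ∀ x : ℝ, 0 < x → HasDerivAt g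
      (3 / (2 * x ^ 2) * (uB x * vB x) * Real.exp (-(3 / 4) / x) +
        EB x * (Real.exp (-(3 / 4) / x) * (-(-(3 / 4) / x ^ 2)))) x := fun x hx =>
    (hasDerivAt_EB hx).mul (hasDerivAt_exp_aux hx (-(3 / 4)))
  have hmono : MonotoneOn g (Set.Ici 1) := by
    apply monotoneOn_of_deriv_nonneg (convex_Ici 1)
    · exact fun x hx => ((hderiv x (lt_of_lt_of_le one_pos hx)).continuousAt).continuousWithinAt
    · intro x hx
      rw [interior_Ici] at hx
      exact ((hderiv x (lt_trans one_pos hx)).differentiableAt).differentiableWithinAt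
    · intro x hx
      rw [interior_Ici] at hx
      have hx0 : (0:ℝ) < x := lt_trans one_pos hx
      rw [(hderiv x hx0).deriv]
      have h1 := uv_ge x
      have h2 := EB_nonneg x
      have h3 : (0:ℝ) < Real.exp (-(3 / 4) / x) := Real.exp_pos _
      have hx2 : (0:ℝ) < x ^ 2 := by positivity
      calc (0:ℝ) = 3 / (2 * x ^ 2) * (-(EB x / 2)) * Real.exp (-(3 / 4) / x) +
            EB x * (Real.exp (-(3 / 4) / x) * (-(-(3 / 4) / x ^ 2))) := by field_simp; ring
        _ ≤ 3 / (2 * x ^ 2) * (uB x * vB x) * Real.exp (-(3 / 4) / x) +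
            EB x * (Real.exp (-(3 / 4) / x) * (-(-(3 / 4) / x ^ 2))) := by
            apply add_le_add_left
            apply mul_le_mul_of_nonneg_right _ h3.le
            apply mul_le_mul_of_nonneg_left h1 (by positivity)
  have hmain := hmono (Set.mem_Ici.mpr le_rfl) (Set.mem_Ici.mpr hs) hs
  have hle : Real.exp (-(3 / 4) / s) ≤ 1 := by
    rw [Real.exp_le_one_iff]
    apply div_nonpos_of_nonpos_of_nonneg <;> norm_num
    linarith
  have h0 : EB s * Real.exp (-(3 / 4) / s) ≤ EB s :=
    mul_le_of_le_one_right (EB_nonneg s) hle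
  calc EB 1 * Real.exp (-(3 / 4)) = g 1 := by rw [hg]; norm_num
    _ ≤ g s := hmain
    _ ≤ EB s := h0

lemma besselJ0_one_pos : 0 < besselJ0 1 := by
  have hpi : (0:ℝ) < π := Real.pi_pos
  have hcos1 : (0:ℝ) < Real.cos 1 := by
    apply Real.cos_pos_of_mem_Ioo
    constructor
    · nlinarith [Real.pi_gt_three]
    · nlinarith [Real.pi_gt_three]
  have hmono : ∀ θ ∈ Set.Icc (0:ℝ) π, Real.cos 1 ≤ Real.cos (1 * Real.sin θ) := by
    intro θ hθ
    rw [one_mul]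
    apply Real.cos_le_cos_of_nonneg_of_le_pi (Real.sin_nonneg_of_nonneg_of_le_pi hθ.1 hθ.2)
      (by linarith [Real.pi_gt_three])
    exact Real.sin_le_one θ
  have hint : (π : ℝ) * Real.cos 1 ≤ ∫ θ in (0:ℝ)..π, Real.cos (1 * Real.sin θ) := by
    have := intervalIntegral.integral_mono_on (μ := volume) hpi.le
      (Continuous.intervalIntegrable continuous_const 0 π)
      (Continuous.intervalIntegrable (by continuity) 0 π) hmono
    simpa using this
  rw [besselJ0]
  have : (0:ℝ) < π * Real.cos 1 := by positivity
  have h2 : (0:ℝ) < ∫ θ in (0:ℝ)..π, Real.cos (1 * Real.sin θ) := lt_of_lt_of_le this hint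
  positivity

lemma EB_one_pos : 0 < EB 1 := by
  have h0 := besselJ0_one_pos
  rw [EB, uB, vB, Real.sqrt_one]
  set a := besselJ0 1
  set b := besselJ1 1
  have : (1:ℝ) * a - b / (2 * 1) = a - b / 2 := by ring
  rw [this, one_mul]
  nlinarith [sq_nonneg (a - b / 2 - 2 * b), sq_nonneg b, mul_pos h0 h0]

lemma uB_continuous : Continuous uB := Real.continuous_sqrt.mul besselJ1_continuous

lemma vB_contOn {N : ℝ} (hN : 1 ≤ N) : ContinuousOn vB (Set.Icc 1 N) := fun s hs =>
  ((hasDerivAt_vB (lt_of_lt_of_le one_pos hs.1)).continuousAt).continuousWithinAt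

lemma key_int {N : ℝ} (hN : 1 ≤ N) :
    (N - 1) * (EB 1 * Real.exp (-(3 / 4))) ≤
      2 * (∫ s in (1:ℝ)..N, uB s ^ 2) + EB 1 * Real.exp (3 / 4) := by
  have huIcc : Set.uIcc (1:ℝ) N = Set.Icc 1 N := Set.uIcc_of_le hN
  have hpos : ∀ s ∈ Set.Icc (1:ℝ) N, (0:ℝ) < s := fun s hs => lt_of_lt_of_le one_pos hs.1
  -- integrability facts
  have hu2 : IntervalIntegrable (fun s => uB s ^ 2) volume 1 N :=
    ((uB_continuous.pow 2)).intervalIntegrable 1 N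
  have hv2 : IntervalIntegrable (fun s => vB s ^ 2) volume 1 N := by
    apply ContinuousOn.intervalIntegrable
    rw [huIcc]; exact (vB_contOn hN).pow 2
  have hcoef : ContinuousOn (fun s : ℝ => 1 - 3 / (4 * s ^ 2)) (Set.Icc 1 N) := by
    apply ContinuousOn.sub continuousOn_const
    apply ContinuousOn.div continuousOn_const (by fun_prop)
    intro s hs
    have := hpos s hs
    positivity
  have hcu2 : IntervalIntegrable (fun s => (1 - 3 / (4 * s ^ 2)) * uB s ^ 2) volume 1 N := by
    apply ContinuousOn.intervalIntegrable
    rw [huIcc]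
    exact hcoef.mul ((uB_continuous.pow 2).continuousOn)
  have hEint : IntervalIntegrable EB volume 1 N := by
    apply ContinuousOn.intervalIntegrable
    rw [huIcc]
    exact fun s hs => ((hasDerivAt_EB (hpos s hs)).continuousAt).continuousWithinAt
  -- FTC for (uB * vB)' = vB^2 - (1 - 3/(4 s^2)) uB^2
  have hftc : (∫ s in (1:ℝ)..N, (vB s ^ 2 - (1 - 3 / (4 * s ^ 2)) * uB s ^ 2)) =
      uB N * vB N - uB 1 * vB 1 := by
    apply intervalIntegral.integral_eq_sub_of_hasDerivAt
    · intro s hs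
      rw [huIcc] at hs
      have hs0 := hpos s hs
      have h := (hasDerivAt_uB hs0).mul (hasDerivAt_vB hs0)
      have e : vB s * vB s + uB s * (-(1 - 3 / (4 * s ^ 2)) * uB s) =
          vB s ^ 2 - (1 - 3 / (4 * s ^ 2)) * uB s ^ 2 := by ring
      rwa [e] at h
    · exact hv2.sub hcu2
  -- lower bound on ∫ EB
  have hElow : (N - 1) * (EB 1 * Real.exp (-(3 / 4))) ≤ ∫ s in (1:ℝ)..N, EB s := by
    have hmono := intervalIntegral.integral_mono_on (μ := volume) hN
      (Continuous.intervalIntegrable continuous_const 1 N) hEint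
      (fun s hs => EB_lower hs.1)
    calc (N - 1) * (EB 1 * Real.exp (-(3 / 4)))
        = ∫ _ in (1:ℝ)..N, EB 1 * Real.exp (-(3 / 4)) := by
          rw [intervalIntegral.integral_const, smul_eq_mul]
      _ ≤ ∫ s in (1:ℝ)..N, EB s := hmono
  -- ∫ EB = ∫ vB^2 + ∫ uB^2
  have hsplit : (∫ s in (1:ℝ)..N, EB s) =
      (∫ s in (1:ℝ)..N, vB s ^ 2) + ∫ s in (1:ℝ)..N, uB s ^ 2 := by
    rw [← intervalIntegral.integral_add hv2 hu2]
    apply intervalIntegral.integral_congr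
    intro s _
    rfl
  -- ∫ (1 - 3/(4 s^2)) uB^2 ≤ ∫ uB^2
  have hcle : (∫ s in (1:ℝ)..N, (1 - 3 / (4 * s ^ 2)) * uB s ^ 2) ≤
      ∫ s in (1:ℝ)..N, uB s ^ 2 := by
    apply intervalIntegral.integral_mono_on hN hcu2 hu2
    intro s hs
    have hs0 := hpos s hs
    have h1 : (1 - 3 / (4 * s ^ 2)) ≤ 1 := by
      have : (0:ℝ) < 3 / (4 * s ^ 2) := by positivity
      linarith
    nlinarith [sq_nonneg (uB s)]
  -- boundary terms bounded
  have hC : EB 1 ≤ EB 1 * Real.exp (3 / 4) :=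
    le_mul_of_one_le_right (EB_nonneg 1) (Real.one_le_exp (by norm_num))
  have hbN : uB N * vB N ≤ EB 1 * Real.exp (3 / 4) / 2 := by
    have := uv_le N
    have h2 := EB_upper hN
    linarith
  have hb1 : -(uB 1 * vB 1) ≤ EB 1 * Real.exp (3 / 4) / 2 := by
    have := uv_ge 1
    linarith
  have hv2le : (∫ s in (1:ℝ)..N, vB s ^ 2) ≤
      EB 1 * Real.exp (3 / 4) + ∫ s in (1:ℝ)..N, uB s ^ 2 := by
    have e : (∫ s in (1:ℝ)..N, vB s ^ 2) =
        (uB N * vB N - uB 1 * vB 1) + ∫ s in (1:ℝ)..N, (1 - 3 / (4 * s ^ 2)) * uB s ^ 2 := by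
      rw [← hftc, ← intervalIntegral.integral_add (hv2.sub hcu2) hcu2]
      apply intervalIntegral.integral_congr
      intro s _; ring
    rw [e]
    have := hcle
    linarith
  linarith [hElow, hsplit ▸ hElow]

/-- `∫_0^N s J₁(s)² ds → +∞` as `N → ∞`. -/
theorem stmt_14 :
    Tendsto (fun N : ℝ => ∫ s in (0:ℝ)..N, s * (besselJ1 s) ^ 2) atTop atTop := by
  set c : ℝ := EB 1 * Real.exp (-(3 / 4)) with hc
  set C : ℝ := EB 1 * Real.exp (3 / 4) with hC
  have hcpos : 0 < c := by
    have := EB_one_pos; positivity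
  have hcont : Continuous (fun s : ℝ => s * (besselJ1 s) ^ 2) :=
    continuous_id.mul (besselJ1_continuous.pow 2)
  have hlow : ∀ N : ℝ, 1 ≤ N →
      ((N - 1) * c - C) / 2 ≤ ∫ s in (0:ℝ)..N, s * (besselJ1 s) ^ 2 := by
    intro N hN
    have h1 : (∫ s in (1:ℝ)..N, uB s ^ 2) = ∫ s in (1:ℝ)..N, s * (besselJ1 s) ^ 2 := by
      apply intervalIntegral.integral_congr
      intro s hs
      rw [Set.uIcc_of_le hN] at hs
      have hs0 : (0:ℝ) ≤ s := le_trans zero_le_one hs.1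
      simp only [uB]
      rw [mul_pow, Real.sq_sqrt hs0]
    have h2 := key_int hN
    rw [h1, ← hc, ← hC] at h2
    have hsplit : (∫ s in (0:ℝ)..N, s * (besselJ1 s) ^ 2) =
        (∫ s in (0:ℝ)..1, s * (besselJ1 s) ^ 2) + ∫ s in (1:ℝ)..N, s * (besselJ1 s) ^ 2 :=
      (intervalIntegral.integral_add_adjacent_intervals
        (hcont.intervalIntegrable 0 1) (hcont.intervalIntegrable 1 N)).symm
    have h01 : (0:ℝ) ≤ ∫ s in (0:ℝ)..1, s * (besselJ1 s) ^ 2 := by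
      apply intervalIntegral.integral_nonneg zero_le_one
      intro s hs
      exact mul_nonneg hs.1 (sq_nonneg _)
    rw [hsplit]
    linarith
  have hφ : Tendsto (fun N : ℝ => ((N - 1) * c - C) / 2) atTop atTop := by
    apply Tendsto.atTop_div_const two_pos
    apply tendsto_atTop_add_const_right
    apply Tendsto.atTop_mul_const hcpos
    exact tendsto_atTop_add_const_right _ _ tendsto_id
  apply tendsto_atTop_mono' atTop _ hφ
  filter_upwards [eventually_ge_atTop (1:ℝ)] with N hN
  exact hlow N hN
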